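/- Let m_h(t;·,·) be a family of symmetric bilinear forms on finite-dimensional spaces V_h(t) with c₁‖v‖² ≤ m_h(t;v,v) ≤ c₂‖v‖², and a_h(t;·,·) bilinear forms satisfying a_h(t;v,v) ≥ c₄‖v‖_{V_h}² − c₅‖v‖². Suppose the transport identity (1/2)(d/dt)m_h(t;U,U) = m_h(t;∂°U,U) + (1/2)g_h(t;U,U) holds with |g_h(t;v,w)| ≤ c₃‖v‖‖w‖, and that U(t) solves (d/dt)m_h(t;U,φ) + a_h(t;U,φ) = m_h(t;U,∂°φ) for all test trajectories φ with ∂°φ arbitrary in V_h(t). Then testing with φ = U yields (1/2)(d/dt)m_h(t;U,U) + a_h(t;U,U) = −(1/2)g_h(t;U,U), and consequently sup_t ‖U(t)‖² + ∫₀ᵀ‖U‖_{V_h}²dt ≤ C‖U(0)‖² with C depending only on c₁,…,c₅, T. -/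

import Mathlib

open MeasureTheory

/-- Abstract stability of the evolving Galerkin scheme: if `U` solves
`d/dt m_h(t;U,φ) + a_h(t;U,φ) = m_h(t;U,∂°φ)` for all test trajectories `φ`,
the transport identity `(1/2) d/dt m_h(t;φ,φ) = m_h(t;∂°φ,φ) + (1/2) g_h(t;φ,φ)`
holds, `m_h` is symmetric and equivalent to `‖·‖²`, `g_h` is bounded, and `a_h`
satisfies a Gårding inequality, then testing with `φ = U` gives
`(1/2) d/dt m_h(t;U,U) + a_h(t;U,U) = -(1/2) g_h(t;U,U)`, and consequently
`sup_t ‖U(t)‖² + ∫₀ᵀ ‖U‖_{V_h}² ≤ C ‖U(0)‖²` with `C` depending only on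
`c₁,…,c₅, T`. -/
theorem evolving_galerkin_stability
    {W : Type*} [NormedAddCommGroup W] [NormedSpace ℝ W] [FiniteDimensional ℝ W]
    (T : ℝ) (hT : 0 < T)
    (m a g : ℝ → W → W → ℝ) (nV : W → ℝ)
    (hnV : ∀ v : W, ‖v‖ ≤ nV v)
    (c₁ c₂ c₃ c₄ c₅ : ℝ)
    (hc₁ : 0 < c₁) (hc₂ : 0 < c₂) (hc₃ : 0 < c₃) (hc₄ : 0 < c₄) (hc₅ : 0 < c₅)
    (hmsymm : ∀ t ∈ Set.Icc (0 : ℝ) T, ∀ v φ : W, m t v φ = m t φ v)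
    (hmbnd : ∀ t ∈ Set.Icc (0 : ℝ) T, ∀ v : W,
      c₁ * ‖v‖ ^ 2 ≤ m t v v ∧ m t v v ≤ c₂ * ‖v‖ ^ 2)
    (hgbnd : ∀ t ∈ Set.Icc (0 : ℝ) T, ∀ v φ : W, |g t v φ| ≤ c₃ * ‖v‖ * ‖φ‖)
    (hacoerc : ∀ t ∈ Set.Icc (0 : ℝ) T, ∀ v : W,
      c₄ * (nV v) ^ 2 - c₅ * ‖v‖ ^ 2 ≤ a t v v)
    (U Ud : ℝ → W)
    (hU : ∀ t ∈ Set.Icc (0 : ℝ) T, HasDerivWithinAt U (Ud t) (Set.Icc 0 T) t)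
    (hUc : ContinuousOn U (Set.Icc 0 T))
    (hnVc : ContinuousOn (fun s => nV (U s)) (Set.Icc 0 T))
    (hac : ContinuousOn (fun s => a s (U s) (U s)) (Set.Icc 0 T))
    (hgc : ContinuousOn (fun s => g s (U s) (U s)) (Set.Icc 0 T))
    (htransport : ∀ φ φd : ℝ → W,
      (∀ t ∈ Set.Icc (0 : ℝ) T, HasDerivWithinAt φ (φd t) (Set.Icc 0 T) t) →
      ∀ t ∈ Set.Icc (0 : ℝ) T,
        HasDerivWithinAt (fun s => m s (φ s) (φ s))
          (2 * m t (φd t) (φ t) + g t (φ t) (φ t)) (Set.Icc 0 T) t)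
    (hscheme : ∀ φ φd : ℝ → W,
      (∀ t ∈ Set.Icc (0 : ℝ) T, HasDerivWithinAt φ (φd t) (Set.Icc 0 T) t) →
      ∀ t ∈ Set.Icc (0 : ℝ) T,
        HasDerivWithinAt (fun s => m s (U s) (φ s))
          (m t (U t) (φd t) - a t (U t) (φ t)) (Set.Icc 0 T) t) :
    (∀ t ∈ Set.Icc (0 : ℝ) T,
      HasDerivWithinAt (fun s => m s (U s) (U s))
        (-(g t (U t) (U t)) - 2 * a t (U t) (U t)) (Set.Icc 0 T) t) ∧
    (∀ t ∈ Set.Icc (0 : ℝ) T,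
      ‖U t‖ ^ 2 + ∫ s in Set.Icc (0 : ℝ) T, (nV (U s)) ^ 2
        ≤ ((c₂ / c₁ + c₂ / (2 * c₄)) * (1 + ((c₃ + 2 * c₅) / c₁) * T) *
            Real.exp (((c₃ + 2 * c₅) / c₁) * T)) * ‖U 0‖ ^ 2) := by
  have h0T : (0 : ℝ) ∈ Set.Icc (0 : ℝ) T := ⟨le_rfl, hT.le⟩
  have hTT : T ∈ Set.Icc (0 : ℝ) T := ⟨hT.le, le_rfl⟩
  set y : ℝ → ℝ := fun s => m s (U s) (U s) with hy
  -- derivative identity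
  have hder : ∀ t ∈ Set.Icc (0 : ℝ) T,
      HasDerivWithinAt y (-(g t (U t) (U t)) - 2 * a t (U t) (U t)) (Set.Icc 0 T) t := by
    intro t ht
    have h1 := hscheme U Ud hU t ht
    have h2 := htransport U Ud hU t ht
    have hu : UniqueDiffWithinAt ℝ (Set.Icc (0 : ℝ) T) t := uniqueDiffOn_Icc hT t ht
    have e1 := h1.derivWithin hu
    have e2 := h2.derivWithin hu
    have hsym := hmsymm t ht (Ud t) (U t)
    have key : 2 * m t (Ud t) (U t) + g t (U t) (U t)
        = -(g t (U t) (U t)) - 2 * a t (U t) (U t) := by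
      have heq : m t (U t) (Ud t) - a t (U t) (U t)
          = 2 * m t (Ud t) (U t) + g t (U t) (U t) := by rw [← e1, ← e2]
      linarith [heq, hsym]
    exact key ▸ h2
  refine ⟨hder, ?_⟩
  set α : ℝ := (c₃ + 2 * c₅) / c₁ with hα
  have hα0 : 0 ≤ α := by positivity
  set y' : ℝ → ℝ := fun s => -(g s (U s) (U s)) - 2 * a s (U s) (U s) with hy'
  have hyc : ContinuousOn y (Set.Icc 0 T) := fun t ht => (hder t ht).continuousWithinAt
  have hy'c : ContinuousOn y' (Set.Icc 0 T) :=
    (hgc.neg).sub (continuousOn_const.mul hac)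
  have hnV2c : ContinuousOn (fun s => (nV (U s)) ^ 2) (Set.Icc 0 T) := hnVc.pow 2
  have hyl : ∀ t ∈ Set.Icc (0 : ℝ) T, c₁ * ‖U t‖ ^ 2 ≤ y t :=
    fun t ht => (hmbnd t ht (U t)).1
  have hy0 : ∀ t ∈ Set.Icc (0 : ℝ) T, 0 ≤ y t :=
    fun t ht => le_trans (by positivity) (hyl t ht)
  -- FTC
  have hFTC : ∀ t ∈ Set.Icc (0 : ℝ) T, ∫ s in (0:ℝ)..t, y' s = y t - y 0 := by
    intro t ht
    refine intervalIntegral.integral_eq_sub_of_hasDeriv_right_of_le ht.1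
      (hyc.mono (Set.Icc_subset_Icc le_rfl ht.2)) (fun x hx => ?_)
      ((hy'c.mono (Set.Icc_subset_Icc le_rfl ht.2)).intervalIntegrable_of_Icc ht.1)
    have hxI : x ∈ Set.Icc (0:ℝ) T := ⟨hx.1.le, (hx.2.le.trans ht.2)⟩
    refine (hder x hxI).mono_of_mem_nhdsWithin ?_
    refine Filter.mem_of_superset
      (Ioc_mem_nhdsGT_of_mem (⟨le_rfl, lt_of_lt_of_le hx.2 ht.2⟩ : x ∈ Set.Ico x T)) ?_
    exact fun z hz => ⟨hxI.1.trans hz.1.le, hz.2⟩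
  -- pointwise differential inequality
  have hptw : ∀ s ∈ Set.Icc (0 : ℝ) T,
      y' s + 2 * c₄ * (nV (U s)) ^ 2 ≤ α * y s := by
    intro s hs
    have h1 := (abs_le.mp (hgbnd s hs (U s) (U s))).1
    have h2 := hacoerc s hs (U s)
    have h3 := hyl s hs
    have h4 : α * (c₁ * ‖U s‖ ^ 2) ≤ α * y s := mul_le_mul_of_nonneg_left h3 hα0
    have hαc : α * c₁ = c₃ + 2 * c₅ := by rw [hα]; exact div_mul_cancel₀ _ hc₁.ne'
    have hsq : ‖U s‖ ^ 2 = ‖U s‖ * ‖U s‖ := pow_two _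
    simp only [hy']
    nlinarith [h1, h2, h4]
  -- integral inequality
  have hint : ∀ t ∈ Set.Icc (0 : ℝ) T,
      y t + 2 * c₄ * ∫ s in (0:ℝ)..t, (nV (U s)) ^ 2
        ≤ y 0 + α * ∫ s in (0:ℝ)..t, y s := by
    intro t ht
    have hsub : Set.Icc (0:ℝ) t ⊆ Set.Icc (0:ℝ) T := Set.Icc_subset_Icc le_rfl ht.2
    have hi1 : IntervalIntegrable (fun s => y' s + 2 * c₄ * (nV (U s)) ^ 2) volume 0 t :=
      ((hy'c.mono hsub).add (continuousOn_const.mul (hnV2c.mono hsub))).intervalIntegrable_of_Icc ht.1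
    have hi2 : IntervalIntegrable (fun s => α * y s) volume 0 t :=
      (continuousOn_const.mul (hyc.mono hsub)).intervalIntegrable_of_Icc ht.1
    have hmono := intervalIntegral.integral_mono_on ht.1 hi1 hi2
      (fun x hx => hptw x (hsub hx))
    have hi3 : IntervalIntegrable y' volume 0 t :=
      (hy'c.mono hsub).intervalIntegrable_of_Icc ht.1
    have hi4 : IntervalIntegrable (fun s => (nV (U s)) ^ 2) volume 0 t :=
      (hnV2c.mono hsub).intervalIntegrable_of_Icc ht.1
    rw [intervalIntegral.integral_add hi3 (hi4.const_mul (2 * c₄)),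
      intervalIntegral.integral_const_mul, intervalIntegral.integral_const_mul,
      hFTC t ht] at hmono
    linarith [hmono]
  set F : ℝ → ℝ := fun t => y 0 + α * ∫ s in (0:ℝ)..t, y s with hF
  have hnVint : ∀ t ∈ Set.Icc (0:ℝ) T, 0 ≤ ∫ s in (0:ℝ)..t, (nV (U s)) ^ 2 :=
    fun t ht => intervalIntegral.integral_nonneg ht.1 (fun x _ => sq_nonneg _)
  have hyF : ∀ t ∈ Set.Icc (0 : ℝ) T, y t ≤ F t := by
    intro t ht
    have h1 := hint t ht
    have h2 := hnVint t ht
    have : 0 ≤ 2 * c₄ * ∫ s in (0:ℝ)..t, (nV (U s)) ^ 2 := by positivity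
    simp only [hF]; linarith
  have hF0 : ∀ t ∈ Set.Icc (0 : ℝ) T, 0 ≤ F t :=
    fun t ht => le_trans (hy0 t ht) (hyF t ht)
  -- continuity of F
  have hIOn : IntegrableOn y (Set.uIcc (0:ℝ) T) volume := by
    rw [Set.uIcc_of_le hT.le]
    exact hyc.integrableOn_Icc
  have hFc : ContinuousOn F (Set.Icc 0 T) := by
    have := (intervalIntegral.continuousOn_primitive_interval hIOn)
    rw [Set.uIcc_of_le hT.le] at this
    exact continuousOn_const.add (continuousOn_const.mul this)
  -- derivative of F from the right
  have hFd : ∀ t ∈ Set.Ico (0:ℝ) T, HasDerivWithinAt F (α * y t) (Set.Ici t) t := by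
    intro t ht
    have hmem : Set.Icc (0:ℝ) T ∈ nhdsWithin t (Set.Ioi t) := by
      refine Filter.mem_of_superset
        (Ioc_mem_nhdsGT_of_mem (⟨le_rfl, ht.2⟩ : t ∈ Set.Ico t T)) ?_
      exact fun z hz => ⟨ht.1.trans hz.1.le, hz.2⟩
    have hInt : IntervalIntegrable y volume 0 t :=
      (hyc.mono (Set.Icc_subset_Icc le_rfl ht.2.le)).intervalIntegrable_of_Icc ht.1
    have hmeas : StronglyMeasurableAtFilter y (nhdsWithin t (Set.Ioi t)) volume :=
      ⟨Set.Icc 0 T, hmem, hyc.aestronglyMeasurable measurableSet_Icc⟩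
    have hcw : ContinuousWithinAt y (Set.Ioi t) t :=
      (hyc t ⟨ht.1, ht.2.le⟩).mono_of_mem_nhdsWithin hmem
    have hd := intervalIntegral.integral_hasDerivWithinAt_right hInt hmeas hcw
      (s := Set.Ici t) (t := Set.Ioi t)
    exact (hd.const_mul α).const_add (y 0)
  -- Gronwall
  have hgron : ∀ t ∈ Set.Icc (0 : ℝ) T, F t ≤ y 0 * Real.exp (α * t) := by
    have hFa : ‖F 0‖ ≤ y 0 := by
      simp only [hF, intervalIntegral.integral_same, mul_zero, add_zero,
        Real.norm_eq_abs, abs_of_nonneg (hy0 0 h0T)]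
      exact le_rfl
    have hbound : ∀ x ∈ Set.Ico (0:ℝ) T, ‖α * y x‖ ≤ α * ‖F x‖ + 0 := by
      intro x hx
      have hxI : x ∈ Set.Icc (0:ℝ) T := ⟨hx.1, hx.2.le⟩
      rw [Real.norm_eq_abs, Real.norm_eq_abs, abs_of_nonneg (mul_nonneg hα0 (hy0 x hxI)),
        abs_of_nonneg (hF0 x hxI), add_zero]
      exact mul_le_mul_of_nonneg_left (hyF x hxI) hα0
    intro t ht
    have := norm_le_gronwallBound_of_norm_deriv_right_le hFc hFd hFa hbound t ht
    rw [gronwallBound_ε0, sub_zero, Real.norm_eq_abs, abs_of_nonneg (hF0 t ht)] at this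
    exact this
  -- final estimate
  intro t ht
  set E : ℝ := Real.exp (α * T) with hE
  have hEpos : 0 < E := Real.exp_pos _
  have hyt : y t ≤ y 0 * E := by
    have h1 := hyF t ht
    have h2 := hgron t ht
    have h3 : Real.exp (α * t) ≤ E := by
      rw [hE]
      exact Real.exp_le_exp.mpr (mul_le_mul_of_nonneg_left ht.2 hα0)
    nlinarith [hy0 0 h0T, Real.exp_pos (α * t)]
  set J : ℝ := ∫ s in Set.Icc (0:ℝ) T, (nV (U s)) ^ 2 with hJ
  have hJeq : J = ∫ s in (0:ℝ)..T, (nV (U s)) ^ 2 := by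
    rw [intervalIntegral.integral_of_le hT.le, hJ, MeasureTheory.integral_Icc_eq_integral_Ioc]
  have hJbnd : 2 * c₄ * J ≤ y 0 * E := by
    have h1 := hint T hTT
    have h2 : y 0 + α * ∫ s in (0:ℝ)..T, y s = F T := rfl
    have h3 := hgron T hTT
    rw [hJeq]
    have h4 := hy0 T hTT
    rw [hE]
    linarith [h1, h3, h4]
  have hy0c₂ : y 0 ≤ c₂ * ‖U 0‖ ^ 2 := (hmbnd 0 h0T (U 0)).2
  have hUt : c₁ * ‖U t‖ ^ 2 ≤ y 0 * E := le_trans (hyl t ht) hyt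
  -- combine
  have hA2 : 2 * c₄ * (c₁ * ‖U t‖ ^ 2) ≤ 2 * c₄ * (y 0 * E) :=
    mul_le_mul_of_nonneg_left hUt (by positivity)
  have hB2 : c₁ * (2 * c₄ * J) ≤ c₁ * (y 0 * E) :=
    mul_le_mul_of_nonneg_left hJbnd hc₁.le
  have hC2 : (2 * c₄ + c₁) * (y 0 * E) ≤ (2 * c₄ + c₁) * (c₂ * ‖U 0‖ ^ 2 * E) := by
    have := mul_le_mul_of_nonneg_right hy0c₂ hEpos.le
    exact mul_le_mul_of_nonneg_left this (by positivity)
  have hD2 : (2 * c₄ + c₁) * (c₂ * ‖U 0‖ ^ 2 * E)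
      ≤ (2 * c₄ + c₁) * (c₂ * ‖U 0‖ ^ 2 * E) * (1 + α * T) := by
    refine le_mul_of_one_le_right (by positivity) ?_
    nlinarith [hα0, hT.le]
  have hK : (c₂ / c₁ + c₂ / (2 * c₄)) * (1 + α * T) * E * ‖U 0‖ ^ 2 * (c₁ * (2 * c₄))
      = (2 * c₄ + c₁) * (c₂ * ‖U 0‖ ^ 2 * E) * (1 + α * T) := by
    field_simp
  have hmain : (‖U t‖ ^ 2 + J) * (c₁ * (2 * c₄))
      ≤ ((c₂ / c₁ + c₂ / (2 * c₄)) * (1 + α * T) * E * ‖U 0‖ ^ 2) * (c₁ * (2 * c₄)) := by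
    rw [hK]
    nlinarith [hA2, hB2, hC2, hD2]
  have := le_of_mul_le_mul_right hmain (by positivity : (0:ℝ) < c₁ * (2 * c₄))
  calc ‖U t‖ ^ 2 + J ≤ (c₂ / c₁ + c₂ / (2 * c₄)) * (1 + α * T) * E * ‖U 0‖ ^ 2 := this
    _ = ((c₂ / c₁ + c₂ / (2 * c₄)) * (1 + α * T) * E) * ‖U 0‖ ^ 2 := by ring
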